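/- Let ν, U, L be positive reals, G, F, E, E2 nonnegative reals, and set Re := U·L/ν and B := (2 + 1/Re)·U³/L. Suppose E2 ≤ 2·G⁴ + 2·F²·U², F ≤ U²/L + (U·ν)/(2·L²) + E/(2·U), and E ≤ G² + B. Then E2 − E² ≤ 2·G⁴ + (2 + 1/Re)·G²·(U³/L) + (3/2)·(2 + 1/Re)²·(U⁶/L²). -/

import Mathlib

set_option maxHeartbeats 1000000


/-- Algebraic core of the second (Reynolds-number form) variance bound in Theorem 5.3. -/
theorem variance_reynolds_bound
    (ν U L G F E E2 Re B : ℝ)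
    (hν : 0 < ν) (hU : 0 < U) (hL : 0 < L)
    (hG : 0 ≤ G) (hF : 0 ≤ F) (hE : 0 ≤ E) (hE2 : 0 ≤ E2)
    (hRe : Re = U * L / ν)
    (hB : B = (2 + 1/Re) * U^3 / L)
    (h1 : E2 ≤ 2 * G^4 + 2 * F^2 * U^2)
    (h2 : F ≤ U^2 / L + (U * ν) / (2 * L^2) + E / (2 * U))
    (h3 : E ≤ G^2 + B) :
    E2 - E^2 ≤ 2 * G^4 + (2 + 1/Re) * G^2 * (U^3 / L) + (3/2) * (2 + 1/Re)^2 * (U^6 / L^2) := by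
  have hRe' : Re = U * L / ν := hRe
  have hRepos : 0 < Re := by rw [hRe']; positivity
  have hinv : 1 / Re = ν / (U * L) := by
    rw [hRe']; field_simp
  have hBval : B = 2 * U^3 / L + ν * U^2 / L^2 := by
    rw [hB, hinv]; field_simp
  have hBpos : 0 < B := by rw [hBval]; positivity
  -- F ≤ (E + B) / (2U)
  have h2' : F ≤ (E + B) / (2 * U) := by
    rw [hBval]
    have heq : U^2 / L + (U * ν) / (2 * L^2) + E / (2 * U)
        = (E + (2 * U^3 / L + ν * U^2 / L^2)) / (2 * U) := by
      field_simp; ring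
    rw [← heq]; exact h2
  have hFsq : 2 * F^2 * U^2 ≤ (E + B)^2 / 2 := by
    have h := mul_le_mul h2' h2' hF (by positivity)
    have hEB : 0 ≤ E + B := by linarith
    calc 2 * F^2 * U^2 ≤ 2 * ((E+B)/(2*U) * ((E+B)/(2*U))) * U^2 := by nlinarith
      _ = (E + B)^2 / 2 := by field_simp
  -- target RHS equals 2G⁴ + G²B + (3/2)B²
  have hrhs : 2 * G^4 + (2 + 1/Re) * G^2 * (U^3 / L) + (3/2) * (2 + 1/Re)^2 * (U^6 / L^2)
      = 2 * G^4 + G^2 * B + (3/2) * B^2 := by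
    rw [hB]; field_simp
  rw [hrhs]
  have key : E2 - E^2 ≤ 2 * G^4 + B^2 := by nlinarith [sq_nonneg (B - E)]
  nlinarith [mul_nonneg (sq_nonneg G) hBpos.le, sq_nonneg B]
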